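/- Let E be an infinite type and let b̄ : E → B ⧸ J be a family such that Algebra.adjoin C (Set.range b̄) = ⊤, i.e. the family generates B ⧸ J as a C-algebra. Then there exists a family b : E → B such that π (b e) = b̄ e for every e ∈ E and Algebra.adjoin C (Set.range b) = ⊤, i.e. every generating family of the quotient algebra indexed by an infinite set lifts to a generating family of B. -/

import Mathlib

/-- Let `B` be a commutative `C`-algebra which is finitely generated as a
`C`-module, `I` a finitely generated ideal of `C`, `J = I·B`, and `π : B → B ⧸ J` the quotient
map. Every family `b̄ : E → B ⧸ J` indexed by an infinite type `E` that generates `B ⧸ J` as a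
`C`-algebra lifts to a family `b : E → B` generating `B` as a `C`-algebra. -/
theorem stmt11 (C B : Type*) [CommRing C] [CommRing B] [Algebra C B]
    [Module.Finite C B] (I : Ideal C) (hI : I.FG)
    (E : Type*) [Infinite E]
    (b' : E → B ⧸ Ideal.map (algebraMap C B) I)
    (hb' : Algebra.adjoin C (Set.range b') = ⊤) :
    ∃ b : E → B,
      (∀ e : E,
        Ideal.Quotient.mk (Ideal.map (algebraMap C B) I) (b e) = b' e) ∧
      Algebra.adjoin C (Set.range b) = ⊤ := by
  classical
  let J : Ideal B := Ideal.map (algebraMap C B) I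
  have hJdef : J = Ideal.map (algebraMap C B) I := rfl
  let π : B →ₐ[C] B ⧸ J := Ideal.Quotient.mkₐ C J
  have hπ : Function.Surjective π := Ideal.Quotient.mkₐ_surjective C J
  have hfin : Module.Finite C (B ⧸ J) :=
    Module.Finite.of_surjective π.toLinearMap hπ
  -- Step 1: a finite subset `F ⊆ E` already generates `B ⧸ J`.
  have hdir : Directed (· ≤ ·) (fun F : Finset E => Algebra.adjoin C (b' '' ↑F)) := by
    intro F G
    exact ⟨F ∪ G, Algebra.adjoin_mono (Set.image_mono (by simp)),
      Algebra.adjoin_mono (Set.image_mono (by simp))⟩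
  have hsup : (⨆ F : Finset E, Algebra.adjoin C (b' '' ↑F)) = ⊤ := by
    rw [← top_le_iff, ← hb', Algebra.adjoin_le_iff]
    rintro x ⟨e, rfl⟩
    exact (le_iSup (fun F : Finset E => Algebra.adjoin C (b' '' ↑F)) {e})
      (Algebra.subset_adjoin (by simp))
  have key : ∀ x : B ⧸ J, ∃ F : Finset E, x ∈ Algebra.adjoin C (b' '' ↑F) := by
    intro x
    have hx : x ∈ (⨆ F : Finset E, Algebra.adjoin C (b' '' ↑F)) := by
      rw [hsup]; exact Algebra.mem_top
    rwa [← SetLike.mem_coe, Subalgebra.coe_iSup_of_directed hdir, Set.mem_iUnion] at hx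
  choose Fx hFx using key
  obtain ⟨t, ht⟩ := hfin.fg_top
  set F : Finset E := t.sup Fx with hFdef
  have hF : Algebra.adjoin C (b' '' (↑F : Set E)) = ⊤ := by
    rw [← Algebra.toSubmodule_eq_top, ← top_le_iff, ← ht, Submodule.span_le]
    intro x hx
    have : x ∈ Algebra.adjoin C (b' '' (↑F : Set E)) :=
      Algebra.adjoin_mono (Set.image_mono (Finset.coe_subset.2 (Finset.le_sup hx))) (hFx x)
    exact this
  -- arbitrary lifts on F
  have hlift : ∀ e : E, ∃ x : B, π x = b' e := fun e => hπ (b' e)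
  choose f hf using hlift
  set A₀ : Subalgebra C B := Algebra.adjoin C (f '' ↑F) with hA₀def
  have hA₀top : A₀.map π = ⊤ := by
    rw [hA₀def, ← Algebra.adjoin_image]
    have himg : π '' (f '' ↑F) = b' '' ↑F := by
      rw [Set.image_image]
      exact Set.image_congr fun e _ => hf e
    rw [himg, hF]
  have hsurj : ∀ y : B ⧸ J, ∃ x, x ∈ A₀ ∧ π x = y := by
    intro y
    have : y ∈ A₀.map π := by rw [hA₀top]; exact Algebra.mem_top
    obtain ⟨x, hx, hx'⟩ := Subalgebra.mem_map.mp this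
    exact ⟨x, hx, hx'⟩
  -- lifts landing in A₀
  have hA : ∀ e : E, ∃ x : B, x ∈ A₀ ∧ π x = b' e := fun e => by
    by_cases he : e ∈ F
    · exact ⟨f e, show f e ∈ Algebra.adjoin C (f '' ↑F) from
        Algebra.subset_adjoin ⟨e, he, rfl⟩, hf e⟩
    · exact hsurj (b' e)
  choose a haA₀ haπ using hA
  -- but make sure the values on F are exactly the f e's
  set a' : E → B := fun e => if e ∈ F then f e else a e with ha'def
  have ha'A₀ : ∀ e, a' e ∈ A₀ := fun e => by
    by_cases he : e ∈ F
    · simpa [ha'def, he] using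
        (Algebra.subset_adjoin (Set.mem_image_of_mem f he) : f e ∈ A₀)
    · simpa [ha'def, he] using haA₀ e
  have ha'π : ∀ e, π (a' e) = b' e := fun e => by
    by_cases he : e ∈ F
    · simpa [ha'def, he] using hf e
    · simpa [ha'def, he] using haπ e
  -- Step 2: a finite generating set of J as a C-module
  obtain ⟨s, hs⟩ := hI
  obtain ⟨u, hu⟩ := Module.Finite.fg_top (R := C) (M := B)
  set jset : Set B := Set.image2 (· • ·) (↑s : Set C) (↑u : Set B) with hjsetdef
  have hjfin : jset.Finite := Set.Finite.image2 _ s.finite_toSet u.finite_toSet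
  have hJspan : Submodule.span C jset = J.restrictScalars C := by
    rw [hjsetdef, Set.image2_smul, ← Submodule.span_smul_span, hs, hu,
      Ideal.smul_top_eq_map, hJdef]
  set js : Finset B := hjfin.toFinset with hjsdef
  have hjsmem : ∀ k : ↥js, (k : B) ∈ J := by
    rintro ⟨k, hk⟩
    have : k ∈ Submodule.span C jset :=
      Submodule.subset_span (hjfin.mem_toFinset.mp hk)
    rw [hJspan] at this
    exact this
  -- Step 3: an injection of the generators into E ∖ F
  obtain ⟨g, hginj, hgF⟩ : ∃ g : ↥js → E, Function.Injective g ∧ ∀ k, g k ∉ F := by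
    have hinf : ((↑F : Set E)ᶜ).Infinite := F.finite_toSet.infinite_compl
    haveI : Infinite ↥((↑F : Set E)ᶜ) := hinf.to_subtype
    let g0 : ↥js ↪ ↥((↑F : Set E)ᶜ) :=
      (Fintype.equivFin ↥js).toEmbedding.trans
        (Fin.valEmbedding.trans (Infinite.natEmbedding _))
    exact ⟨fun k => (g0 k : E), fun k l h => g0.injective (Subtype.ext h),
      fun k => (g0 k).2⟩
  -- the correction term
  set corr : E → B := fun e => ∑ k : ↥js, if g k = e then (k : B) else 0 with hcorrdef
  have hcorrJ : ∀ e, corr e ∈ J := fun e => by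
    apply Ideal.sum_mem
    intro k _
    by_cases h : g k = e
    · simpa [h] using hjsmem k
    · simp [h]
  have hcorrF : ∀ e ∈ F, corr e = 0 := fun e he => by
    apply Finset.sum_eq_zero
    intro k _
    have : g k ≠ e := fun h => hgF k (h ▸ he)
    simp [this]
  have hcorrg : ∀ k : ↥js, corr (g k) = (k : B) := fun k => by
    have h0 : corr (g k) = ∑ l : ↥js, if g l = g k then (l : B) else 0 := rfl
    rw [h0, Finset.sum_eq_single k]
    · simp
    · intro l _ hlk
      have : g l ≠ g k := fun h => hlk (hginj h)
      simp [this]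
    · intro h; exact absurd (Finset.mem_univ k) h
  -- the lifting family
  refine ⟨fun e => a' e + corr e, ?_, ?_⟩
  · intro e
    have : Ideal.Quotient.mk J (a' e + corr e) = b' e := by
      rw [map_add, Ideal.Quotient.eq_zero_iff_mem.mpr (hcorrJ e), add_zero]
      exact ha'π e
    simpa using this
  · set b : E → B := fun e => a' e + corr e with hbdef
    set A : Subalgebra C B := Algebra.adjoin C (Set.range b) with hAdef
    have hA₀A : A₀ ≤ A := by
      rw [hA₀def]
      apply Algebra.adjoin_le
      rintro y ⟨e, heF, rfl⟩
      have heF' : e ∈ F := heF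
      have hb : b e = f e := by
        simp [hbdef, ha'def, heF', hcorrF e heF']
      exact hb ▸ Algebra.subset_adjoin ⟨e, rfl⟩
    have hjA : ∀ k : ↥js, (k : B) ∈ A := fun k => by
      have h1 : b (g k) ∈ A := Algebra.subset_adjoin ⟨g k, rfl⟩
      have h2 : a' (g k) ∈ A := hA₀A (ha'A₀ _)
      have hk : (k : B) = b (g k) - a' (g k) := by
        rw [hbdef]; simp [hcorrg k]
      rw [hk]
      exact sub_mem h1 h2
    rw [eq_top_iff]
    intro x _
    obtain ⟨y, hyA₀, hy⟩ := hsurj (π x)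
    have hxy : x - y ∈ J := by
      rw [← Ideal.Quotient.eq] at *
      show Ideal.Quotient.mk J x = Ideal.Quotient.mk J y
      exact hy.symm
    have hxyA : x - y ∈ A := by
      have hmem : x - y ∈ Submodule.span C jset := by rw [hJspan]; exact hxy
      have hsub : jset ⊆ (Subalgebra.toSubmodule A : Set B) := by
        intro z hz
        exact hjA ⟨z, hjfin.mem_toFinset.mpr hz⟩
      exact Submodule.span_le.mpr hsub hmem
    have hx : x = y + (x - y) := by ring
    rw [hx]
    exact add_mem (hA₀A hyA₀) hxyA
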